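/- Let ξ, ζ, A, P be positive real numbers with ζ ≤ ξ, A ≥ 1, P ≥ 2, and let α ∈ (1, 2]. Then there exists exactly one K₀ ∈ (1, P) such that G_α(K₀) = 0. -/
import Mathlib


/-- For positive ξ, ζ, A, P with ζ ≤ ξ, A ≥ 1, P ≥ 2 and α ∈ (1,2],
there exists exactly one K₀ ∈ (1, P) such that G_α(K₀) = 0. -/
theorem stmt_12 (ξ ζ A P α : ℝ) (hξ : 0 < ξ) (hζ : 0 < ζ)
    (hζξ : ζ ≤ ξ) (hA : 1 ≤ A) (hP : 2 ≤ P) (hα : α ∈ Set.Ioc (1 : ℝ) 2) :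
    ∃! K₀ : ℝ, K₀ ∈ Set.Ioo (1 : ℝ) P ∧
      ζ / Real.log 2 * K₀ -
        ξ * A * (α * Real.logb 2 (P / K₀) ^ (α - 1) / Real.log 2 + Real.logb 2 (P / K₀) ^ α)
        = 0 := by
  obtain ⟨hα1, hα2⟩ := hα
  have hln2 : (0:ℝ) < Real.log 2 := Real.log_pos one_lt_two
  have hP0 : (0:ℝ) < P := by linarith
  have hξA : (0:ℝ) < ξ * A := by nlinarith
  set g : ℝ → ℝ := fun K => ζ / Real.log 2 * K -
      ξ * A * (α * Real.logb 2 (P / K) ^ (α - 1) / Real.log 2 + Real.logb 2 (P / K) ^ α)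
    with hg
  have hLnn : ∀ K ∈ Set.Icc (1:ℝ) P, 0 ≤ Real.logb 2 (P / K) := by
    intro K hK
    apply Real.logb_nonneg one_lt_two
    rw [le_div_iff₀ (by linarith [hK.1])]
    simpa using hK.2
  -- strict monotonicity of g on [1, P]
  have hmono : StrictMonoOn g (Set.Icc 1 P) := by
    intro a ha b hb hab
    have hLa := hLnn a ha
    have hLb := hLnn b hb
    have hLlt : Real.logb 2 (P / b) < Real.logb 2 (P / a) := by
      apply Real.logb_lt_logb one_lt_two (div_pos hP0 (by linarith [hb.1]))
      exact div_lt_div_of_pos_left hP0 (by linarith [ha.1]) hab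
    have h1 : Real.logb 2 (P / b) ^ (α - 1) < Real.logb 2 (P / a) ^ (α - 1) :=
      Real.rpow_lt_rpow hLb hLlt (by linarith)
    have h2 : Real.logb 2 (P / b) ^ α < Real.logb 2 (P / a) ^ α :=
      Real.rpow_lt_rpow hLb hLlt (by linarith)
    have hd : α * Real.logb 2 (P / b) ^ (α - 1) / Real.log 2 <
        α * Real.logb 2 (P / a) ^ (α - 1) / Real.log 2 := by
      rw [div_lt_div_iff₀ hln2 hln2]
      exact mul_lt_mul_of_pos_right (mul_lt_mul_of_pos_left h1 (by linarith)) hln2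
    have hc : ζ / Real.log 2 * a < ζ / Real.log 2 * b :=
      mul_lt_mul_of_pos_left hab (div_pos hζ hln2)
    have key := mul_lt_mul_of_pos_left (add_lt_add hd h2) hξA
    simp only [hg]
    linarith
  -- continuity of g on [1, P]
  have hcont : ContinuousOn g (Set.Icc 1 P) := by
    intro K hK
    have hK0 : K ≠ 0 := by
      have := hK.1; intro h; rw [h] at this; linarith
    have hPK : P / K ≠ 0 := by
      have : (0:ℝ) < P / K := div_pos hP0 (by linarith [hK.1])
      exact this.ne'
    have hLcont : ContinuousAt (fun K => Real.logb 2 (P / K)) K := by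
      simp only [Real.logb]
      exact (Real.continuousAt_log hPK).comp (continuousAt_const.div continuousAt_id hK0)
        |>.div_const _
    have hr1 : ContinuousAt (fun K => Real.logb 2 (P / K) ^ (α - 1)) K :=
      (Real.continuousAt_rpow_const _ _ (Or.inr (by linarith))).comp hLcont
    have hr2 : ContinuousAt (fun K => Real.logb 2 (P / K) ^ α) K :=
      (Real.continuousAt_rpow_const _ _ (Or.inr (by linarith))).comp hLcont
    exact ((continuousAt_const.mul continuousAt_id).sub
      (continuousAt_const.mul (((continuousAt_const.mul hr1).div_const _).add hr2))).continuousWithinAt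
  -- g 1 < 0
  have hL0 : (1:ℝ) ≤ Real.logb 2 P := by
    have : Real.logb 2 2 ≤ Real.logb 2 P :=
      Real.logb_le_logb_of_le one_lt_two (by norm_num) hP
    simpa using this
  have hg1 : g 1 < 0 := by
    have hr : (1:ℝ) ≤ Real.logb 2 P ^ (α - 1) :=
      Real.one_le_rpow hL0 (by linarith)
    have hs : (0:ℝ) < Real.logb 2 P ^ α :=
      Real.rpow_pos_of_pos (by linarith) _
    have key : ζ / Real.log 2 ≤ ξ * A * α * (Real.logb 2 P ^ (α - 1)) / Real.log 2 := by
      rw [div_le_div_iff₀ hln2 hln2]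
      have t1 : ξ ≤ ξ * A := by nlinarith
      have t2 : ξ * A ≤ ξ * A * α := by nlinarith
      have t3 : ξ * A * α ≤ ξ * A * α * Real.logb 2 P ^ (α - 1) := by
        nlinarith [mul_pos hξA (show (0:ℝ) < α by linarith)]
      have h5 : ζ ≤ ξ * A * α * Real.logb 2 P ^ (α - 1) := by linarith
      exact mul_le_mul_of_nonneg_right h5 hln2.le
    simp only [hg, div_one, mul_one]
    have hpos : 0 < ξ * A * Real.logb 2 P ^ α := mul_pos hξA hs
    have expand : ξ * A * (α * Real.logb 2 P ^ (α - 1) / Real.log 2 + Real.logb 2 P ^ α)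
        = ξ * A * α * Real.logb 2 P ^ (α - 1) / Real.log 2 + ξ * A * Real.logb 2 P ^ α := by
      ring
    linarith [key, hpos, expand]
  -- g P > 0
  have hgP : 0 < g P := by
    have hLP : Real.logb 2 (P / P) = 0 := by
      rw [div_self hP0.ne']; simp
    simp only [hg, hLP, Real.zero_rpow (by linarith : α - 1 ≠ 0),
      Real.zero_rpow (by linarith : α ≠ 0)]
    have : 0 < ζ / Real.log 2 * P := mul_pos (div_pos hζ hln2) hP0
    simpa using this
  -- existence via IVT
  have hsub : Set.Ioo (g 1) (g P) ⊆ g '' Set.Ioo 1 P :=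
    intermediate_value_Ioo (by linarith) hcont
  obtain ⟨K₀, hK₀mem, hK₀⟩ := hsub ⟨hg1, hgP⟩
  refine ⟨K₀, ⟨hK₀mem, hK₀⟩, ?_⟩
  rintro K₁ ⟨hK₁mem, hK₁⟩
  exact hmono.injOn (Set.Ioo_subset_Icc_self hK₁mem) (Set.Ioo_subset_Icc_self hK₀mem)
    (hK₁.trans hK₀.symm)
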